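/- Let d : Ω × Ω → ℝ be a semi-metric on a finite set Ω of n points (d(u,w) ≥ 0, d(u,u) = 0, d(u,w) = d(w,u)), and let γ be the semi-cohesion measure induced by d, namely γ(u,w) = (1/n)∑_{u₂∈Ω} d(u₂,w) + (1/n)∑_{u₁∈Ω} d(u,u₁) − (1/n²)∑_{u₂∈Ω}∑_{u₁∈Ω} d(u₂,u₁) − d(u,w). Then the semi-metric induced back from γ recovers d: for all u,w, (γ(u,u) + γ(w,w))/2 − γ(u,w) = d(u,w). Thus the correspondence between semi-metrics and their induced semi-cohesion measures is a one-to-one mapping on semi-metrics. -/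
import Mathlib

open Finset

/-- If `γ` is the semi-cohesion measure induced by a semi-metric `d` on a
finite set `Ω` of `n` points, then the semi-metric induced back from `γ` recovers `d`:
`(γ(u,u)+γ(w,w))/2 − γ(u,w) = d(u,w)` for all `u, w`. -/
theorem gme_semimetric_duality {Ω : Type*} [Fintype Ω]
    (d : Ω → Ω → ℝ)
    (hnonneg : ∀ u w, 0 ≤ d u w)
    (hnull : ∀ u, d u u = 0)
    (hsymm : ∀ u w, d u w = d w u)
    (γ : Ω → Ω → ℝ)
    (hγ : ∀ u w, γ u w =
      (1 / (Fintype.card Ω : ℝ)) * ∑ u₂ : Ω, d u₂ w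
      + (1 / (Fintype.card Ω : ℝ)) * ∑ u₁ : Ω, d u u₁
      - (1 / (Fintype.card Ω : ℝ)) ^ 2 * ∑ u₂ : Ω, ∑ u₁ : Ω, d u₂ u₁
      - d u w) :
    ∀ u w, (γ u u + γ w w) / 2 - γ u w = d u w := by
  intro u w
  have h1 : ∀ x : Ω, ∑ y : Ω, d y x = ∑ y : Ω, d x y :=
    fun x => Finset.sum_congr rfl (fun y _ => hsymm y x)
  simp only [hγ, hnull, h1]
  ring
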